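/- WKB asymptotics of the monodromy matrix at large momentum (Section 9): Let T_per > 0 and let A = (A₁, A₂) : ℝ → ℝ² be continuously differentiable and T_per-periodic with ∫₀^{T_per} A₁(T) dT = ∫₀^{T_per} A₂(T) dT = 0. Then there exist constants C > 0 and ξ₀ > 0 such that for every real ξ with |ξ| ≥ ξ₀ and every fundamental solution U_ξ of i U′(T) = [ξ σ₁ + A₁(T) σ₁ − A₂(T) σ₂] U(T), the monodromy matrix satisfies ‖U_ξ(T_per) − exp(−i ξ T_per σ₁)‖ ≤ C / |ξ| (in the operator norm on ℂ²). Note that exp(−i ξ T_per σ₁) is unitary with eigenvalues e^{−iξ T_per} and e^{iξ T_per}. -/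

import Mathlib

open Matrix Complex intervalIntegral

noncomputable section

/-- The Pauli matrix `σ₁ = [[0,1],[1,0]]`. -/
def pauli1 : Matrix (Fin 2) (Fin 2) ℂ := !![0, 1; 1, 0]

/-- The Pauli matrix `σ₂ = [[0,−i],[i,0]]`. -/
def pauli2 : Matrix (Fin 2) (Fin 2) ℂ := !![0, -Complex.I; Complex.I, 0]

/-- The WKB generator `D(T) = ξ σ₁ + A₁(T) σ₁ − A₂(T) σ₂`. -/
def Dwkb (A : ℝ → ℝ × ℝ) (ξ : ℝ) (T : ℝ) : Matrix (Fin 2) (Fin 2) ℂ :=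
  (ξ : ℂ) • pauli1 + ((A T).1 : ℂ) • pauli1 - ((A T).2 : ℂ) • pauli2

/-- `U : ℝ → M₂(ℂ)` is a fundamental solution of `i U′(T) = D(T) U(T)`:
`U(0) = I` and (entrywise) `U′(T) = −i D(T) U(T)` for every `T`. -/
def IsFundamentalSolution (D U : ℝ → Matrix (Fin 2) (Fin 2) ℂ) : Prop :=
  U 0 = 1 ∧
  ∀ T : ℝ, ∀ i j : Fin 2,
    HasDerivAt (fun t : ℝ => U t i j) (((-Complex.I) • (D T * U T)) i j) T

/-! ### Auxiliary infrastructure -/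

attribute [local instance] Matrix.linftyOpNormedAddCommGroup Matrix.linftyOpNormedSpace
  Matrix.linftyOpNormedRing Matrix.linftyOpNormedAlgebra

/-- Shorthand for our matrix type. -/
abbrev Mat := Matrix (Fin 2) (Fin 2) ℂ

instance : TopologicalSpace.PseudoMetrizableSpace Mat :=
  (inferInstance : @TopologicalSpace.PseudoMetrizableSpace Mat
    (@UniformSpace.toTopologicalSpace Mat (@PseudoMetricSpace.toUniformSpace Mat inferInstance)))

instance : ENormedAddMonoid Mat :=
  (inferInstance : @ENormedAddMonoid Mat
    (@UniformSpace.toTopologicalSpace Mat (@PseudoMetricSpace.toUniformSpace Mat inferInstance)))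

/-- The rotation matrix `exp (i t σ₁)`. -/
def rot (t : ℝ) : Mat :=
  !![(Real.cos t : ℂ), Complex.I * Real.sin t; Complex.I * Real.sin t, (Real.cos t : ℂ)]

def Pmat : Mat := !![1, 1; 1, -1]

def Punit : (Mat)ˣ where
  val := Pmat
  inv := (2:ℂ)⁻¹ • Pmat
  val_inv := by ext i j; fin_cases i <;> fin_cases j <;> simp [Pmat, Matrix.mul_apply, Fin.sum_univ_two] <;> ring
  inv_val := by ext i j; fin_cases i <;> fin_cases j <;> simp [Pmat, Matrix.mul_apply, Fin.sum_univ_two] <;> ring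

lemma exp_pauli1 (z : ℂ) :
    NormedSpace.exp (z • pauli1) =
      Complex.cosh z • (1 : Mat) + Complex.sinh z • pauli1 := by
  have h1 : z • pauli1 = (Punit : Mat) * diagonal ![z, -z] * (↑Punit⁻¹ : Mat) := by
    show _ = Pmat * diagonal ![z, -z] * ((2:ℂ)⁻¹ • Pmat)
    rw [show diagonal ![z, -z] = !![z,0;0,-z] by ext i j; fin_cases i <;> fin_cases j <;> simp [Matrix.diagonal_apply]]
    ext i j
    fin_cases i <;> fin_cases j <;>
      simp [Pmat, pauli1, Matrix.mul_apply, Fin.sum_univ_two] <;> ring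
  rw [h1, Matrix.exp_units_conj, Matrix.exp_diagonal]
  show Pmat * diagonal (NormedSpace.exp ![z, -z]) * ((2:ℂ)⁻¹ • Pmat) = _
  have he : diagonal (NormedSpace.exp ![z, -z]) = !![Complex.exp z, 0; 0, Complex.exp (-z)] := by
    rw [Pi.exp_def]
    ext i j
    fin_cases i <;> fin_cases j <;> simp [Matrix.diagonal_apply, ← Complex.exp_eq_exp_ℂ]
  rw [he]
  ext i j
  fin_cases i <;> fin_cases j <;>
    simp [Pmat, pauli1, Matrix.mul_apply, Fin.sum_univ_two, Complex.cosh, Complex.sinh] <;> ring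

lemma exp_pauli1' (ξ T : ℝ) :
    NormedSpace.exp ((-(Complex.I * ξ * T)) • pauli1) = rot (-(ξ * T)) := by
  rw [show (-(Complex.I * ξ * T)) = ((-(ξ*T):ℝ) : ℂ) * Complex.I by push_cast; ring]
  rw [exp_pauli1]
  ext i j
  rw [Complex.cosh_mul_I, Complex.sinh_mul_I]
  fin_cases i <;> fin_cases j <;>
    simp [rot, pauli1, ← Complex.ofReal_cos, ← Complex.ofReal_sin] <;> push_cast <;> ring

lemma hasDerivAt_entries {F : ℝ → Mat} {F' : Mat} {x : ℝ}
    (h : ∀ i j, HasDerivAt (fun t => F t i j) (F' i j) x) : HasDerivAt F F' x := by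
  have hF : F = fun t => ∑ i : Fin 2, ∑ j : Fin 2, F t i j • Matrix.single i j (1:ℂ) := by
    funext t
    conv_lhs => rw [matrix_eq_sum_single (F t)]
    congr 1; funext i; congr 1; funext j
    rw [smul_single, smul_eq_mul, mul_one]
  have hF' : F' = ∑ i : Fin 2, ∑ j : Fin 2, F' i j • Matrix.single i j (1:ℂ) := by
    conv_lhs => rw [matrix_eq_sum_single F']
    congr 1; funext i; congr 1; funext j
    rw [smul_single, smul_eq_mul, mul_one]
  rw [hF, hF']
  exact HasDerivAt.fun_sum fun i _ => HasDerivAt.fun_sum fun j _ => (h i j).smul_const (Matrix.single i j (1:ℂ))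

lemma smul_I_pauli1_rot (c u : ℝ) : (c:ℂ) • (Complex.I • (pauli1 * rot u)) =
    !![((-Real.sin u * c : ℝ) : ℂ), Complex.I * ((Real.cos u * c : ℝ) : ℂ);
       Complex.I * ((Real.cos u * c : ℝ) : ℂ), ((-Real.sin u * c : ℝ) : ℂ)] := by
  ext i j
  fin_cases i <;> fin_cases j <;>
    simp [pauli1, rot, Matrix.mul_apply, Fin.sum_univ_two] <;> push_cast <;> ring_nf <;>
      simp [Complex.I_sq] <;> ring

lemma rot_entries_deriv {θ : ℝ → ℝ} {θ' x : ℝ} (h : HasDerivAt θ θ' x) :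
    HasDerivAt (fun t => rot (θ t)) ((θ' : ℂ) • (Complex.I • (pauli1 * rot (θ x)))) x := by
  apply hasDerivAt_entries
  have hc : HasDerivAt (fun t => ((Real.cos (θ t) : ℝ) : ℂ)) (((-Real.sin (θ x) * θ') : ℝ) : ℂ) x :=
    HasDerivAt.ofReal_comp ((Real.hasDerivAt_cos (θ x)).comp x h)
  have hs : HasDerivAt (fun t => Complex.I * ((Real.sin (θ t) : ℝ) : ℂ)) (Complex.I * ((Real.cos (θ x) * θ' : ℝ) : ℂ)) x :=
    (HasDerivAt.ofReal_comp ((Real.hasDerivAt_sin (θ x)).comp x h)).const_mul Complex.I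
  rw [smul_I_pauli1_rot]
  intro i j
  fin_cases i <;> fin_cases j <;> simp only [rot] <;>
    first
      | simpa using hc
      | simpa using hs

lemma rot_zero : rot 0 = 1 := by
  ext i j; fin_cases i <;> fin_cases j <;> simp [rot]

lemma rot_mul_rot (a b : ℝ) : rot a * rot b = rot (a + b) := by
  ext i j
  fin_cases i <;> fin_cases j <;>
    simp [rot, Matrix.mul_apply, Fin.sum_univ_two, Real.cos_add, Real.sin_add] <;>
    push_cast <;> ring_nf <;> simp [Complex.I_sq] <;> ring

lemma pauli1_mul_pauli1 : pauli1 * pauli1 = 1 := by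
  ext i j; fin_cases i <;> fin_cases j <;> simp [pauli1, Matrix.mul_apply, Fin.sum_univ_two]

lemma rot_mul_pauli1 (t : ℝ) : rot t * pauli1 = pauli1 * rot t := by
  ext i j; fin_cases i <;> fin_cases j <;> simp [rot, pauli1, Matrix.mul_apply, Fin.sum_univ_two]

lemma rot_mul_pauli2 (t : ℝ) : rot t * pauli2 = pauli2 * rot (-t) := by
  ext i j
  fin_cases i <;> fin_cases j <;>
    simp [rot, pauli2, Matrix.mul_apply, Fin.sum_univ_two] <;> ring

lemma rot_eq_smul (t : ℝ) : rot t = ((Real.cos t : ℝ) : ℂ) • (1 : Mat) + (Complex.I * ((Real.sin t : ℝ) : ℂ)) • pauli1 := by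
  ext i j
  fin_cases i <;> fin_cases j <;> simp [rot, pauli1] <;> ring

lemma norm_rot_le (t : ℝ) : ‖rot t‖ ≤ ‖(1 : Mat)‖ + ‖pauli1‖ := by
  rw [rot_eq_smul]
  have h1 : ‖((Real.cos t : ℝ) : ℂ)‖ ≤ 1 := by
    rw [Complex.norm_real, Real.norm_eq_abs]; exact Real.abs_cos_le_one t
  have h2 : ‖Complex.I * ((Real.sin t : ℝ) : ℂ)‖ ≤ 1 := by
    rw [norm_mul, Complex.norm_I, one_mul, Complex.norm_real, Real.norm_eq_abs]
    exact Real.abs_sin_le_one t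
  refine (norm_add_le _ _).trans ?_
  rw [norm_smul, norm_smul]
  have := norm_nonneg (1 : Mat)
  have := norm_nonneg pauli1
  nlinarith

lemma continuous_rot_comp {g : ℝ → ℝ} (hg : Continuous g) : Continuous fun t => rot (g t) := by
  have : (fun t => rot (g t)) = fun t =>
      ((Real.cos (g t) : ℝ) : ℂ) • (1 : Mat) + (Complex.I * ((Real.sin (g t) : ℝ) : ℂ)) • pauli1 := by
    funext t; exact rot_eq_smul (g t)
  rw [this]
  exact (((Complex.continuous_ofReal.comp (Real.continuous_cos.comp hg)).smul continuous_const).add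
    (((continuous_const.mul (Complex.continuous_ofReal.comp (Real.continuous_sin.comp hg)))).smul continuous_const))

lemma key_algebra (p q r u : ℝ) (V : Mat) :
    (((p + q : ℝ)) : ℂ) • (Complex.I • (pauli1 * rot u)) * V +
      rot u * ((-Complex.I) • (((p:ℂ) • pauli1 + (q:ℂ) • pauli1 - (r:ℂ) • pauli2) * V)) =
    ((Complex.I * (r:ℂ)) • (pauli2 * rot (-(2*u)))) * (rot u * V) := by
  have hp1 : rot u * (pauli1 * V) = pauli1 * (rot u * V) := by
    rw [← mul_assoc, rot_mul_pauli1, mul_assoc]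
  have hp2 : rot u * (pauli2 * V) = pauli2 * (rot (-u) * V) := by
    rw [← mul_assoc, rot_mul_pauli2, mul_assoc]
  have hrr : rot (-(2*u)) * (rot u * V) = rot (-u) * V := by
    rw [← mul_assoc, rot_mul_rot, show -(2*u) + u = -u by ring]
  simp only [smul_mul_assoc, mul_smul_comm, Matrix.add_mul, Matrix.sub_mul, Matrix.mul_add,
    Matrix.mul_sub, smul_smul, smul_sub, smul_add, mul_assoc, neg_smul, Complex.ofReal_add]
  rw [hp1, hp2, hrr]
  module

lemma mulVec_euclidean_bound (N : Mat) (w : EuclideanSpace ℂ (Fin 2)) :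
    ‖(WithLp.equiv 2 (Fin 2 → ℂ)).symm (N.mulVec ((WithLp.equiv 2 (Fin 2 → ℂ)) w))‖ ≤
      2 * ‖N‖ * ‖w‖ := by
  set v : Fin 2 → ℂ := (WithLp.equiv 2 (Fin 2 → ℂ)) w with hv
  have hvw : ∀ i, ‖v i‖ ≤ ‖w‖ := by
    intro i
    have : ‖v i‖ ^ 2 ≤ ∑ j : Fin 2, ‖w j‖ ^ 2 := by
      have : ‖v i‖ ^ 2 = ‖w i‖ ^ 2 := rfl
      rw [this]
      exact Finset.single_le_sum (f := fun j => ‖w j‖^2) (fun j _ => by positivity) (Finset.mem_univ i)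
    have h2 := EuclideanSpace.norm_eq w
    nlinarith [norm_nonneg (v i), norm_nonneg w, Real.sq_sqrt (show (0:ℝ) ≤ ∑ j : Fin 2, ‖w j‖ ^ 2 by positivity), Real.sqrt_nonneg (∑ j : Fin 2, ‖w j‖ ^ 2)]
  have hvnorm : ‖v‖ ≤ ‖w‖ := by
    rw [pi_norm_le_iff_of_nonneg (norm_nonneg w)]
    exact hvw
  have hmv : ‖N.mulVec v‖ ≤ ‖N‖ * ‖w‖ :=
    (Matrix.linfty_opNorm_mulVec N v).trans (mul_le_mul_of_nonneg_left hvnorm (norm_nonneg N))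
  have heq : ∀ i, ‖((WithLp.equiv 2 (Fin 2 → ℂ)).symm (N.mulVec v)) i‖ ≤ ‖N.mulVec v‖ :=
    fun i => norm_le_pi_norm (N.mulVec v) i
  rw [EuclideanSpace.norm_eq]
  have : ∑ i : Fin 2, ‖((WithLp.equiv 2 (Fin 2 → ℂ)).symm (N.mulVec v)) i‖ ^ 2 ≤
      (2 * ‖N.mulVec v‖) ^ 2 := by
    rw [Fin.sum_univ_two]
    have h0 := pow_le_pow_left₀ (norm_nonneg _) (heq 0) 2
    have h1 := pow_le_pow_left₀ (norm_nonneg _) (heq 1) 2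
    have := norm_nonneg (N.mulVec v)
    nlinarith
  refine (Real.sqrt_le_sqrt this).trans ?_
  rw [Real.sqrt_sq (by positivity)]
  calc 2 * ‖N.mulVec v‖ ≤ 2 * (‖N‖ * ‖w‖) := by gcongr
    _ = 2 * ‖N‖ * ‖w‖ := by ring


set_option maxHeartbeats 2000000 in
/-- **WKB asymptotics of the monodromy matrix at large momentum** (Section 9): for a `C¹`,
`T_per`-periodic, mean-zero forcing `A`, there are `C, ξ₀ > 0` such that for `|ξ| ≥ ξ₀`
the monodromy matrix of `i U′ = [ξσ₁ + A₁(T)σ₁ − A₂(T)σ₂] U` satisfies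
`‖U_ξ(T_per) − exp(−iξT_per σ₁)‖ ≤ C/|ξ|` in the operator norm on `ℂ²` (expressed via the
action on vectors with the Euclidean norm). -/
theorem wkb_monodromy_asymptotics
    (Tper : ℝ) (hTper : 0 < Tper)
    (A : ℝ → ℝ × ℝ) (hA : ContDiff ℝ 1 A)
    (hperiodic : ∀ T : ℝ, A (T + Tper) = A T)
    (hmean₁ : ∫ T in (0 : ℝ)..Tper, (A T).1 = 0)
    (hmean₂ : ∫ T in (0 : ℝ)..Tper, (A T).2 = 0) :
    ∃ C > (0 : ℝ), ∃ ξ₀ > (0 : ℝ), ∀ ξ : ℝ, ξ₀ ≤ |ξ| →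
      ∀ U : ℝ → Matrix (Fin 2) (Fin 2) ℂ,
        IsFundamentalSolution (Dwkb A ξ) U →
        ∀ w : EuclideanSpace ℂ (Fin 2),
          ‖(WithLp.equiv 2 (Fin 2 → ℂ)).symm
              ((U Tper - NormedSpace.exp ((-(Complex.I * ξ * Tper)) • pauli1)).mulVec
                ((WithLp.equiv 2 (Fin 2 → ℂ)) w))‖ ≤ (C / |ξ|) * ‖w‖ := by
  classical
  set a1 : ℝ → ℝ := fun t => (A t).1 with ha1def
  set a2 : ℝ → ℝ := fun t => (A t).2 with ha2def
  have ha1 : ContDiff ℝ 1 a1 := contDiff_fst.comp hA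
  have ha2 : ContDiff ℝ 1 a2 := contDiff_snd.comp hA
  have ha1c : Continuous a1 := ha1.continuous
  have ha2c : Continuous a2 := ha2.continuous
  have ha1d : ∀ t, HasDerivAt a1 (deriv a1 t) t := fun t => (ha1.differentiable one_ne_zero t).hasDerivAt
  have ha2d : ∀ t, HasDerivAt a2 (deriv a2 t) t := fun t => (ha2.differentiable one_ne_zero t).hasDerivAt
  have hda1c : Continuous (deriv a1) := ha1.continuous_deriv le_rfl
  have hda2c : Continuous (deriv a2) := ha2.continuous_deriv le_rfl
  obtain ⟨M, hM1, hMa1, hMa2, hMda1, hMda2⟩ : ∃ M : ℝ, 1 ≤ M ∧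
      (∀ s ∈ Set.Icc (0:ℝ) Tper, |a1 s| ≤ M) ∧ (∀ s ∈ Set.Icc (0:ℝ) Tper, |a2 s| ≤ M) ∧
      (∀ s ∈ Set.Icc (0:ℝ) Tper, |deriv a1 s| ≤ M) ∧ (∀ s ∈ Set.Icc (0:ℝ) Tper, |deriv a2 s| ≤ M) := by
    obtain ⟨C1, hC1⟩ := isCompact_Icc.exists_bound_of_continuousOn (s := Set.Icc (0:ℝ) Tper) ha1c.continuousOn
    obtain ⟨C2, hC2⟩ := isCompact_Icc.exists_bound_of_continuousOn (s := Set.Icc (0:ℝ) Tper) ha2c.continuousOn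
    obtain ⟨C3, hC3⟩ := isCompact_Icc.exists_bound_of_continuousOn (s := Set.Icc (0:ℝ) Tper) hda1c.continuousOn
    obtain ⟨C4, hC4⟩ := isCompact_Icc.exists_bound_of_continuousOn (s := Set.Icc (0:ℝ) Tper) hda2c.continuousOn
    refine ⟨max 1 (max (max C1 C2) (max C3 C4)), le_max_left _ _, ?_, ?_, ?_, ?_⟩ <;> intro s hs
    · exact (hC1 s hs).trans (le_max_of_le_right (le_max_of_le_left (le_max_left _ _)))
    · exact (hC2 s hs).trans (le_max_of_le_right (le_max_of_le_left (le_max_right _ _)))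
    · exact (hC3 s hs).trans (le_max_of_le_right (le_max_of_le_right (le_max_left _ _)))
    · exact (hC4 s hs).trans (le_max_of_le_right (le_max_of_le_right (le_max_right _ _)))
  have hMpos : (0:ℝ) < M := lt_of_lt_of_le one_pos hM1
  have hn1pos : (0:ℝ) < ‖(1:Mat)‖ := norm_pos_iff.2 one_ne_zero
  have hp1pos : (0:ℝ) < ‖pauli1‖ := by
    refine norm_pos_iff.2 fun h => ?_
    have := congrFun (congrFun h 0) 1
    simp [pauli1] at this
  have hp2pos : (0:ℝ) < ‖pauli2‖ := by
    refine norm_pos_iff.2 fun h => ?_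
    have := congrFun (congrFun h 1) 0
    simp [pauli2, Complex.I_ne_zero] at this
  set cR : ℝ := ‖(1:Mat)‖ + ‖pauli1‖ with hcRdef
  have hcRpos : 0 < cR := by rw [hcRdef]; exact add_pos hn1pos hp1pos
  set Mc : ℝ := M * (‖pauli2‖ * cR) with hMcdef
  have hMcpos : 0 < Mc := by rw [hMcdef]; exact mul_pos hMpos (mul_pos hp2pos hcRpos)
  set K1 : ℝ := (2*M + Tper*(2*M + 4*M^2)) * (‖pauli2‖ * ‖pauli1‖ * cR) with hK1def
  have hK1pos : 0 < K1 := by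
    rw [hK1def]
    refine mul_pos (by nlinarith) (mul_pos (mul_pos hp2pos hp1pos) hcRpos)
  set K2 : ℝ := K1 * Real.exp (Mc*Tper) + K1 with hK2def
  have hK2pos : 0 < K2 := by
    rw [hK2def]
    have := Real.exp_pos (Mc*Tper)
    nlinarith
  refine ⟨2*cR*K2, by nlinarith, 2*M+1, by linarith, ?_⟩
  intro ξ hξ U hU w
  obtain ⟨hU0, hU'⟩ := hU
  have hxi1 : 1 ≤ |ξ| := by linarith
  have hxipos : (0:ℝ) < |ξ| := by linarith
  have hUd : ∀ t, HasDerivAt U ((-Complex.I) • (Dwkb A ξ t * U t)) t :=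
    fun t => hasDerivAt_entries (hU' t)
  have hUc : Continuous U := continuous_iff_continuousAt.2 fun t => (hUd t).continuousAt
  set θ : ℝ → ℝ := fun t => ξ * t + ∫ s in (0:ℝ)..t, a1 s with hθdef
  have hθd : ∀ t, HasDerivAt θ (ξ + a1 t) t := by
    intro t
    have h1 : HasDerivAt (fun t : ℝ => ξ * t) ξ t := by simpa using (hasDerivAt_id t).const_mul ξ
    have h2 : HasDerivAt (fun u : ℝ => ∫ s in (0:ℝ)..u, a1 s) (a1 t) t :=
      intervalIntegral.integral_hasDerivAt_right (ha1c.intervalIntegrable 0 t)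
        (ha1c.stronglyMeasurableAtFilter _ _) ha1c.continuousAt
    exact h1.add h2
  have hθc : Continuous θ := continuous_iff_continuousAt.2 fun t => (hθd t).continuousAt
  have hθ0 : θ 0 = 0 := by simp [hθdef]
  set W : ℝ → Mat := fun t => rot (θ t) * U t with hWdef
  have hWc : Continuous W := (continuous_rot_comp hθc).mul hUc
  have hW0 : W 0 = 1 := by
    rw [hWdef]; simp only; rw [hθ0, hU0, rot_zero, mul_one]
  set Cm : ℝ → Mat := fun t => (Complex.I * (a2 t : ℂ)) • (pauli2 * rot (-(2 * θ t))) with hCmdef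
  have hCmc : Continuous Cm := by
    apply Continuous.fun_smul
    · exact continuous_const.mul (Complex.continuous_ofReal.comp ha2c)
    · exact continuous_const.mul (continuous_rot_comp (by fun_prop))
  have hWd : ∀ t, HasDerivAt W (Cm t * W t) t := by
    intro t
    have h := (rot_entries_deriv (hθd t)).mul (hUd t)
    have heq := key_algebra ξ (a1 t) (a2 t) (θ t) (U t)
    have hgoal : (Complex.I * ((a2 t : ℝ):ℂ)) • (pauli2 * rot (-(2 * θ t))) * (rot (θ t) * U t) =
        (((ξ + a1 t : ℝ)) : ℂ) • (Complex.I • (pauli1 * rot (θ t))) * U t +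
          rot (θ t) * ((-Complex.I) • (Dwkb A ξ t * U t)) := by
      rw [show Dwkb A ξ t = (ξ:ℂ) • pauli1 + ((a1 t : ℝ):ℂ) • pauli1 - ((a2 t : ℝ):ℂ) • pauli2 from rfl]
      exact heq.symm
    rw [hWdef, hCmdef]
    simp only
    rw [hgoal]
    exact h
  set F : ℝ → Mat := fun t => ∫ s in (0:ℝ)..t, Cm s with hFdef
  have hFd : ∀ t, HasDerivAt F (Cm t) t := fun t =>
    intervalIntegral.integral_hasDerivAt_right (hCmc.intervalIntegrable 0 t)
      (hCmc.stronglyMeasurableAtFilter _ _) hCmc.continuousAt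
  have hFc : Continuous F := continuous_iff_continuousAt.2 fun t => (hFd t).continuousAt
  have hF0 : F 0 = 0 := by simp [hFdef]
  have hnormCm : ∀ t ∈ Set.Icc (0:ℝ) Tper, ‖Cm t‖ ≤ Mc := by
    intro t ht
    rw [hCmdef]
    simp only
    rw [norm_smul, norm_mul, Complex.norm_I, one_mul, Complex.norm_real, Real.norm_eq_abs]
    calc |a2 t| * ‖pauli2 * rot (-(2 * θ t))‖ ≤ M * (‖pauli2‖ * cR) := by
          apply mul_le_mul (hMa2 t ht) ?_ (norm_nonneg _) (le_of_lt hMpos)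
          exact (norm_mul_le _ _).trans (mul_le_mul_of_nonneg_left (norm_rot_le _) (norm_nonneg _))
      _ = Mc := rfl
  have hFbound : ∀ t ∈ Set.Icc (0:ℝ) Tper, ‖F t‖ ≤ K1 / |ξ| := by
    set g : ℝ → ℝ := fun s => a2 s / (2*(ξ + a1 s)) with hgdef
    set g' : ℝ → ℝ := fun s =>
      (deriv a2 s * (2*(ξ + a1 s)) - a2 s * (2*deriv a1 s)) / (2*(ξ + a1 s))^2 with hg'def
    have hden : ∀ s ∈ Set.Icc (0:ℝ) Tper, |ξ|/2 ≤ |ξ + a1 s| := by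
      intro s hs
      have h := hMa1 s hs
      have h2 : |ξ| - |a1 s| ≤ |ξ + a1 s| := by
        have h3 := abs_sub_abs_le_abs_sub ξ (-(a1 s))
        rw [abs_neg, sub_neg_eq_add] at h3
        exact h3
      linarith
    have hdenne : ∀ s ∈ Set.Icc (0:ℝ) Tper, (2*(ξ + a1 s)) ≠ 0 := by
      intro s hs h0
      have h1 : ξ + a1 s = 0 := by linarith [mul_eq_zero.1 h0, (two_ne_zero (α := ℝ))]
      have := hden s hs
      rw [h1, abs_zero] at this
      linarith
    have hgd : ∀ s ∈ Set.Icc (0:ℝ) Tper, HasDerivAt g (g' s) s := by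
      intro s hs
      have hd : HasDerivAt (fun s => 2*(ξ + a1 s)) (2*deriv a1 s) s := by
        simpa using ((hasDerivAt_const s ξ).add (ha1d s)).const_mul 2
      exact (ha2d s).div hd (hdenne s hs)
    have hgb : ∀ s ∈ Set.Icc (0:ℝ) Tper, |g s| ≤ M/|ξ| := by
      intro s hs
      rw [hgdef]
      simp only
      rw [abs_div]
      have hd2 : |ξ| ≤ |2*(ξ + a1 s)| := by
        rw [abs_mul, _root_.abs_two]
        linarith [hden s hs]
      exact div_le_div₀ (le_of_lt hMpos) (hMa2 s hs) hxipos hd2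
    have hg'b : ∀ s ∈ Set.Icc (0:ℝ) Tper, |g' s| ≤ (2*M + 4*M^2)/|ξ| := by
      intro s hs
      rw [hg'def]
      simp only
      rw [abs_div]
      have hnum : |deriv a2 s * (2*(ξ + a1 s)) - a2 s * (2*deriv a1 s)| ≤ 2*M*|ξ| + 4*M^2 := by
        rw [sub_eq_add_neg]
        refine (abs_add_le _ _).trans ?_
        rw [abs_neg, abs_mul, abs_mul, abs_mul, abs_mul, _root_.abs_two]
        have h1 := hMa1 s hs
        have h2 := hMa2 s hs
        have h3 := hMda1 s hs
        have h4 := hMda2 s hs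
        have h5 : |ξ + a1 s| ≤ |ξ| + M := (abs_add_le _ _).trans (by linarith)
        have h6 : (0:ℝ) ≤ |ξ + a1 s| := abs_nonneg _
        have h7 : (0:ℝ) ≤ |deriv a2 s| := abs_nonneg _
        have h8 : (0:ℝ) ≤ |a2 s| := abs_nonneg _
        have h9 : (0:ℝ) ≤ |deriv a1 s| := abs_nonneg _
        nlinarith
      have hden2 : |ξ|^2 ≤ |(2*(ξ + a1 s))^2| := by
        rw [_root_.abs_pow]
        refine pow_le_pow_left₀ (abs_nonneg _) ?_ 2
        rw [abs_mul, _root_.abs_two]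
        linarith [hden s hs]
      calc |deriv a2 s * (2*(ξ + a1 s)) - a2 s * (2*deriv a1 s)| / |(2*(ξ + a1 s))^2| ≤
            (2*M*|ξ| + 4*M^2) / |ξ|^2 :=
          div_le_div₀ (by nlinarith [sq_nonneg M, hMpos, hxipos]) hnum (pow_pos hxipos 2) hden2
        _ ≤ (2*M + 4*M^2)/|ξ| := by
          rw [div_le_div_iff₀ (pow_pos hxipos 2) hxipos]
          have hxx : |ξ| ≤ |ξ|^2 := by nlinarith
          nlinarith [mul_le_mul_of_nonneg_left hxx (show (0:ℝ) ≤ 4*M^2 by positivity)]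
    set MM : Mat := pauli2 * pauli1 with hMMdef
    have hMMrot_norm : ∀ u : ℝ, ‖MM * rot u‖ ≤ ‖pauli2‖*‖pauli1‖*cR := by
      intro u
      calc ‖MM * rot u‖ ≤ ‖MM‖ * ‖rot u‖ := norm_mul_le _ _
        _ ≤ (‖pauli2‖*‖pauli1‖) * cR :=
          mul_le_mul (by rw [hMMdef]; exact norm_mul_le _ _) (norm_rot_le u) (norm_nonneg _)
            (mul_nonneg (norm_nonneg _) (norm_nonneg _))
        _ = ‖pauli2‖*‖pauli1‖*cR := by ring
    set Gm : ℝ → Mat := fun s => ((-(g s) : ℝ) : ℂ) • (MM * rot (-(2 * θ s))) with hGmdef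
    have hGmd : ∀ s ∈ Set.Icc (0:ℝ) Tper,
        HasDerivAt Gm (((-(g' s) : ℝ) : ℂ) • (MM * rot (-(2 * θ s))) + Cm s) s := by
      intro s hs
      have hc : HasDerivAt (fun s => ((-(g s):ℝ):ℂ)) ((-(g' s):ℝ):ℂ) s :=
        HasDerivAt.ofReal_comp ((hgd s hs).neg)
      have hθ2 : HasDerivAt (fun s => -(2*θ s)) (-(2*(ξ + a1 s))) s := by
        simpa using ((hθd s).const_mul 2).fun_neg
      have hY : HasDerivAt (fun s => MM * rot (-(2*θ s)))
          (MM * (((-(2*(ξ + a1 s)) : ℝ):ℂ) • (Complex.I • (pauli1 * rot (-(2*θ s)))))) s :=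
        (rot_entries_deriv hθ2).const_mul MM
      have h := hc.smul hY
      have hterm : ((-(g s):ℝ):ℂ) •
          (MM * (((-(2*(ξ + a1 s)) : ℝ):ℂ) • (Complex.I • (pauli1 * rot (-(2*θ s)))))) = Cm s := by
        rw [hCmdef]
        simp only
        have hMMp : MM * pauli1 = pauli2 := by rw [hMMdef, mul_assoc, pauli1_mul_pauli1, mul_one]
        have hscal : g s * (2*(ξ + a1 s)) = a2 s := by
          rw [hgdef]
          simp only
          exact div_mul_cancel₀ _ (hdenne s hs)
        rw [mul_smul_comm, mul_smul_comm, smul_smul, smul_smul, ← mul_assoc MM, hMMp]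
        congr 1
        push_cast
        rw [← hscal]
        push_cast
        ring
      rw [hGmdef]
      rw [← hterm, add_comm]
      exact h
    intro t ht
    have hsub : Set.uIcc (0:ℝ) t ⊆ Set.Icc (0:ℝ) Tper := by
      rw [Set.uIcc_of_le ht.1]
      exact Set.Icc_subset_Icc le_rfl ht.2
    have hg'cont : ContinuousOn (fun s => ((-(g' s):ℝ):ℂ) • (MM * rot (-(2 * θ s))))
        (Set.Icc (0:ℝ) Tper) := by
      apply ContinuousOn.fun_smul
      · apply Complex.continuous_ofReal.comp_continuousOn
        apply ContinuousOn.neg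
        rw [hg'def]
        apply ContinuousOn.div
        · exact ((hda2c.mul (by fun_prop)).sub (ha2c.mul (by fun_prop))).continuousOn
        · exact (by fun_prop : Continuous fun s => (2*(ξ + a1 s))^2).continuousOn
        · intro s hs
          exact pow_ne_zero 2 (hdenne s hs)
      · exact (continuous_const.mul (continuous_rot_comp (by fun_prop))).continuousOn
    have hint1 : IntervalIntegrable
        (fun s => ((-(g' s):ℝ):ℂ) • (MM * rot (-(2 * θ s))) + Cm s) MeasureTheory.volume 0 t :=
      ((hg'cont.mono hsub).intervalIntegrable.add (hCmc.intervalIntegrable 0 t))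
    have hftc := intervalIntegral.integral_eq_sub_of_hasDerivAt (f := Gm)
      (f' := fun s => ((-(g' s):ℝ):ℂ) • (MM * rot (-(2 * θ s))) + Cm s)
      (fun s hs => hGmd s (hsub hs)) hint1
    have hsplit : ∫ s in (0:ℝ)..t, (((-(g' s):ℝ):ℂ) • (MM * rot (-(2 * θ s))) + Cm s) =
        (∫ s in (0:ℝ)..t, ((-(g' s):ℝ):ℂ) • (MM * rot (-(2 * θ s)))) + ∫ s in (0:ℝ)..t, Cm s :=
      intervalIntegral.integral_add (hg'cont.mono hsub).intervalIntegrable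
        (hCmc.intervalIntegrable 0 t)
    have hFt : F t = Gm t - Gm 0 - ∫ s in (0:ℝ)..t, ((-(g' s):ℝ):ℂ) • (MM * rot (-(2 * θ s))) := by
      rw [hFdef]
      simp only
      rw [← hftc, hsplit]
      abel
    have hGmn : ∀ s ∈ Set.Icc (0:ℝ) Tper, ‖Gm s‖ ≤ (M/|ξ|) * (‖pauli2‖*‖pauli1‖*cR) := by
      intro s hs
      rw [hGmdef]
      simp only
      rw [norm_smul, Complex.norm_real, Real.norm_eq_abs, abs_neg]
      exact mul_le_mul (hgb s hs) (hMMrot_norm _) (norm_nonneg _)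
        (div_nonneg hMpos.le hxipos.le)
    have hIb : ‖∫ s in (0:ℝ)..t, ((-(g' s):ℝ):ℂ) • (MM * rot (-(2 * θ s)))‖ ≤
        ((2*M+4*M^2)/|ξ| * (‖pauli2‖*‖pauli1‖*cR)) * Tper := by
      have hb : ∀ s ∈ Set.uIoc (0:ℝ) t,
          ‖((-(g' s):ℝ):ℂ) • (MM * rot (-(2 * θ s)))‖ ≤ (2*M+4*M^2)/|ξ| * (‖pauli2‖*‖pauli1‖*cR) := by
        intro s hs
        have hs' : s ∈ Set.Icc (0:ℝ) Tper := by
          rw [Set.uIoc_of_le ht.1] at hs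
          exact ⟨le_of_lt hs.1, hs.2.trans ht.2⟩
        rw [norm_smul, Complex.norm_real, Real.norm_eq_abs, abs_neg]
        exact mul_le_mul (hg'b s hs') (hMMrot_norm _) (norm_nonneg _)
          (div_nonneg (by nlinarith [sq_nonneg M, hMpos]) hxipos.le)
      refine (intervalIntegral.norm_integral_le_of_norm_le_const hb).trans ?_
      rw [sub_zero, _root_.abs_of_nonneg ht.1]
      have hC0 : (0:ℝ) ≤ (2*M+4*M^2)/|ξ| * (‖pauli2‖*‖pauli1‖*cR) :=
        mul_nonneg (div_nonneg (by nlinarith [sq_nonneg M, hMpos]) hxipos.le)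
          (mul_nonneg (mul_nonneg (norm_nonneg _) (norm_nonneg _)) hcRpos.le)
      exact mul_le_mul_of_nonneg_left ht.2 hC0
    rw [hFt]
    have h0T : (0:ℝ) ∈ Set.Icc (0:ℝ) Tper := Set.left_mem_Icc.2 (le_of_lt hTper)
    calc ‖Gm t - Gm 0 - ∫ s in (0:ℝ)..t, ((-(g' s):ℝ):ℂ) • (MM * rot (-(2 * θ s)))‖ ≤
          ‖Gm t - Gm 0‖ + ‖∫ s in (0:ℝ)..t, ((-(g' s):ℝ):ℂ) • (MM * rot (-(2 * θ s)))‖ :=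
        norm_sub_le _ _
      _ ≤ (‖Gm t‖ + ‖Gm 0‖) + ((2*M+4*M^2)/|ξ| * (‖pauli2‖*‖pauli1‖*cR)) * Tper :=
        add_le_add (norm_sub_le _ _) hIb
      _ ≤ ((M/|ξ|) * (‖pauli2‖*‖pauli1‖*cR) + (M/|ξ|) * (‖pauli2‖*‖pauli1‖*cR)) +
          ((2*M+4*M^2)/|ξ| * (‖pauli2‖*‖pauli1‖*cR)) * Tper := by
        gcongr
        · exact hGmn t ht
        · exact hGmn 0 h0T
      _ = K1 / |ξ| := by
        rw [hK1def]
        field_simp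
        ring
  have hW1 : ‖W Tper - 1‖ ≤ K2 / |ξ| := by
    set G : ℝ → Mat := fun t => W t - 1 - F t with hGdef
    have hGc : ContinuousOn G (Set.Icc (0:ℝ) Tper) :=
      ((hWc.sub continuous_const).sub hFc).continuousOn
    have hGd : ∀ t, HasDerivAt G (Cm t * G t + Cm t * F t) t := by
      intro t
      have h := ((hWd t).sub_const (1:Mat)).sub (hFd t)
      have heq2 : Cm t * W t - Cm t = Cm t * ((W t - 1) - F t) + Cm t * F t := by
        rw [Matrix.mul_sub, Matrix.mul_sub, Matrix.mul_one]
        abel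
      rw [hGdef]
      simp only
      rw [show Cm t * (W t - 1 - F t) + Cm t * F t = Cm t * ((W t - 1) - F t) + Cm t * F t from rfl,
        ← heq2]
      exact h
    have hGnorm : ∀ t ∈ Set.Ico (0:ℝ) Tper, ‖Cm t * G t + Cm t * F t‖ ≤ Mc * ‖G t‖ + Mc * (K1/|ξ|) := by
      intro t ht
      have ht' : t ∈ Set.Icc (0:ℝ) Tper := ⟨ht.1, le_of_lt ht.2⟩
      refine (norm_add_le _ _).trans ?_
      have h1 := (norm_mul_le (Cm t) (G t)).trans
        (mul_le_mul_of_nonneg_right (hnormCm t ht') (norm_nonneg _))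
      have h2 := (norm_mul_le (Cm t) (F t)).trans
        (mul_le_mul (hnormCm t ht') (hFbound t ht') (norm_nonneg _) (le_of_lt hMcpos))
      linarith
    have hG0 : ‖G 0‖ ≤ 0 := by
      rw [hGdef]
      simp only
      rw [hW0, hF0]
      simp
    have key := norm_le_gronwallBound_of_norm_deriv_right_le hGc
      (fun t _ => (hGd t).hasDerivWithinAt) hG0 hGnorm Tper
      (Set.right_mem_Icc.2 (le_of_lt hTper))
    have hgb2 : gronwallBound 0 Mc (Mc*(K1/|ξ|)) (Tper - 0) ≤ (K1/|ξ|) * Real.exp (Mc*Tper) := by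
      rw [gronwallBound_of_K_ne_0 (ne_of_gt hMcpos)]
      simp only
      rw [sub_zero, zero_mul, zero_add]
      have hq : Mc*(K1/|ξ|)/Mc = K1/|ξ| := by
        field_simp
      rw [hq]
      have hexp := Real.exp_pos (Mc*Tper)
      have hK1' : 0 < K1/|ξ| := div_pos hK1pos hxipos
      nlinarith
    have hFT := hFbound Tper (Set.right_mem_Icc.2 (le_of_lt hTper))
    have hWG : W Tper - 1 = G Tper + F Tper := by
      rw [hGdef]
      simp only
      abel
    rw [hWG]
    calc ‖G Tper + F Tper‖ ≤ ‖G Tper‖ + ‖F Tper‖ := norm_add_le _ _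
      _ ≤ (K1/|ξ|) * Real.exp (Mc*Tper) + K1/|ξ| := add_le_add (key.trans hgb2) hFT
      _ = K2 / |ξ| := by
        rw [hK2def]
        field_simp
  have hθT : θ Tper = ξ * Tper := by
    rw [hθdef]; simp only; rw [hmean₁, add_zero]
  have hUT : U Tper - NormedSpace.exp ((-(Complex.I * ξ * Tper)) • pauli1) =
      rot (-(θ Tper)) * (W Tper - 1) := by
    rw [mul_sub, mul_one, hWdef]
    simp only
    rw [← mul_assoc, rot_mul_rot, neg_add_cancel, rot_zero, one_mul, exp_pauli1', hθT]
  have hnormUT : ‖U Tper - NormedSpace.exp ((-(Complex.I * ξ * Tper)) • pauli1)‖ ≤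
      cR * (K2 / |ξ|) := by
    rw [hUT]
    exact (norm_mul_le _ _).trans (mul_le_mul (norm_rot_le _) hW1 (norm_nonneg _) (le_of_lt hcRpos))
  calc ‖(WithLp.equiv 2 (Fin 2 → ℂ)).symm
        ((U Tper - NormedSpace.exp ((-(Complex.I * ξ * Tper)) • pauli1)).mulVec
          ((WithLp.equiv 2 (Fin 2 → ℂ)) w))‖ ≤
      2 * ‖U Tper - NormedSpace.exp ((-(Complex.I * ξ * Tper)) • pauli1)‖ * ‖w‖ :=
        mulVec_euclidean_bound _ w
    _ ≤ 2 * (cR * (K2 / |ξ|)) * ‖w‖ := by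
        gcongr
    _ = (2*cR*K2 / |ξ|) * ‖w‖ := by ring
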